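/- For Gessel's walk, i.e., p_{1,0} = p_{1,1} = p_{-1,0} = p_{-1,-1} = 1/4 and all other p_{i,j} = 0, the drift is zero, the correlation coefficient R = (Σ_{i,j} ij·p_{i,j})/(√(Σ_{i,j} i²·p_{i,j})·√(Σ_{i,j} j²·p_{i,j})) equals 1/√2, the angle θ = arccos(−R) equals 3π/4, and the group of the walk W is finite of order 8. -/

import Mathlib

open Polynomial

/-- The kernel `K(x,y) = xy(Σ_{-1≤i,j≤1} p_{i,j} x^i y^j - 1)` as an element of `ℂ[x,y]`
(written with nonnegative exponents `i+1, j+1 ∈ {0,1,2}`). -/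
noncomputable def kernelK (p : ℤ → ℤ → ℝ) : MvPolynomial (Fin 2) ℂ :=
  (∑ i ∈ Finset.Icc (-1 : ℤ) 1, ∑ j ∈ Finset.Icc (-1 : ℤ) 1,
      MvPolynomial.C (p i j : ℂ) * MvPolynomial.X 0 ^ (i + 1).toNat *
        MvPolynomial.X 1 ^ (j + 1).toNat)
    - MvPolynomial.X 0 * MvPolynomial.X 1

/-- `a(x) = p_{1,1} x² + p_{0,1} x + p_{-1,1}` as a polynomial over `ℂ`. -/
noncomputable def polyA (p : ℤ → ℤ → ℝ) : Polynomial ℂ :=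
  C (p 1 1 : ℂ) * X ^ 2 + C (p 0 1 : ℂ) * X + C (p (-1) 1 : ℂ)

/-- `c(x) = p_{1,-1} x² + p_{0,-1} x + p_{-1,-1}` as a polynomial over `ℂ`. -/
noncomputable def polyC (p : ℤ → ℤ → ℝ) : Polynomial ℂ :=
  C (p 1 (-1) : ℂ) * X ^ 2 + C (p 0 (-1) : ℂ) * X + C (p (-1) (-1) : ℂ)

/-- `ã(y) = p_{1,1} y² + p_{1,0} y + p_{1,-1}` as a polynomial over `ℂ`. -/
noncomputable def polyAt (p : ℤ → ℤ → ℝ) : Polynomial ℂ :=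
  C (p 1 1 : ℂ) * X ^ 2 + C (p 1 0 : ℂ) * X + C (p 1 (-1) : ℂ)

/-- `c̃(y) = p_{-1,1} y² + p_{-1,0} y + p_{-1,-1}` as a polynomial over `ℂ`. -/
noncomputable def polyCt (p : ℤ → ℤ → ℝ) : Polynomial ℂ :=
  C (p (-1) 1 : ℂ) * X ^ 2 + C (p (-1) 0 : ℂ) * X + C (p (-1) (-1) : ℂ)

/-- The quotient ring `ℂ[x,y]/(K)`. -/
abbrev QuotK (p : ℤ → ℤ → ℝ) : Type :=
  MvPolynomial (Fin 2) ℂ ⧸ Ideal.span {kernelK p}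

/-- The image `x̄` of `x` in a fraction field `F` of `ℂ[x,y]/(K)`. -/
noncomputable def xbar (p : ℤ → ℤ → ℝ) (F : Type*) [Field F] [Algebra (QuotK p) F] : F :=
  algebraMap (QuotK p) F (Ideal.Quotient.mk (Ideal.span {kernelK p}) (MvPolynomial.X 0))

/-- The image `ȳ` of `y` in a fraction field `F` of `ℂ[x,y]/(K)`. -/
noncomputable def ybar (p : ℤ → ℤ → ℝ) (F : Type*) [Field F] [Algebra (QuotK p) F] : F :=
  algebraMap (QuotK p) F (Ideal.Quotient.mk (Ideal.span {kernelK p}) (MvPolynomial.X 1))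

/-- The correlation coefficient `R` of the walk. -/
noncomputable def corrR (p : ℤ → ℤ → ℝ) : ℝ :=
  (∑ i ∈ Finset.Icc (-1 : ℤ) 1, ∑ j ∈ Finset.Icc (-1 : ℤ) 1, (i : ℝ) * (j : ℝ) * p i j) /
    (Real.sqrt (∑ i ∈ Finset.Icc (-1 : ℤ) 1, ∑ j ∈ Finset.Icc (-1 : ℤ) 1, (i : ℝ) ^ 2 * p i j) *
     Real.sqrt (∑ i ∈ Finset.Icc (-1 : ℤ) 1, ∑ j ∈ Finset.Icc (-1 : ℤ) 1, (j : ℝ) ^ 2 * p i j))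

/-- The angle `θ = arccos(-R)`. -/
noncomputable def theta (p : ℤ → ℤ → ℝ) : ℝ := Real.arccos (-(corrR p))

/-- The jump probabilities of Gessel's walk:
`p_{1,0} = p_{1,1} = p_{-1,0} = p_{-1,-1} = 1/4`, all others `0`. -/
noncomputable def gessel : ℤ → ℤ → ℝ := fun i j =>
  if (i = 1 ∧ j = 0) ∨ (i = 1 ∧ j = 1) ∨ (i = -1 ∧ j = 0) ∨ (i = -1 ∧ j = -1) then 1 / 4 else 0

/-! ### Auxiliary lemmas -/

section GroupAux
variable {G : Type*} [Group G] {a b : G}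

/-- A group generated by two involutions whose product has order four is dihedral of order 8. -/
lemma dihedral8 (ha : a ^ 2 = 1) (hb : b ^ 2 = 1)
    (h4 : (a * b) ^ 4 = 1) (h2 : (a * b) ^ 2 ≠ 1) :
    ((Subgroup.closure {a, b} : Subgroup G) : Set G).Finite ∧
      Nat.card ↥(Subgroup.closure {a, b} : Subgroup G) = 8 := by
  set c := a * b with hc
  have hainv : a⁻¹ = a := by rw [inv_eq_iff_mul_eq_one, ← pow_two, ha]
  have hbinv : b⁻¹ = b := by rw [inv_eq_iff_mul_eq_one, ← pow_two, hb]
  have horder : orderOf c = 4 := by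
    have hdvd := orderOf_dvd_of_pow_eq_one h4
    have hmem : orderOf c ∈ Nat.divisors 4 := Nat.mem_divisors.mpr ⟨hdvd, by norm_num⟩
    have hd4 : Nat.divisors 4 = {1, 2, 4} := by decide
    rw [hd4] at hmem
    simp only [Finset.mem_insert, Finset.mem_singleton] at hmem
    rcases hmem with h | h | h
    · exact absurd (by rw [orderOf_eq_one_iff.mp h]; simp) h2
    · exact absurd (by rw [← h]; exact pow_orderOf_eq_one c) h2
    · exact h
  have hmodc : ∀ m : ℕ, c ^ m = c ^ (m % 4) := by
    intro m; rw [← pow_mod_orderOf, horder]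
  have hmoda : ∀ m : ℕ, a ^ m = a ^ (m % 2) := by
    intro m
    conv_lhs => rw [show m = m % 2 + 2 * (m/2) from (Nat.mod_add_div m 2).symm]
    rw [pow_add, pow_mul, ha, one_pow, mul_one]
  have hswap : ∀ m : ℕ, a * c ^ m = c ^ (3*m) * a := by
    intro m
    have hconj : a * c * a⁻¹ = c⁻¹ := by
      rw [hainv, hc, mul_inv_rev, hainv, hbinv, ← mul_assoc, ← pow_two, ha, one_mul]
    have hconjm : a * c ^ m * a⁻¹ = (c⁻¹) ^ m := by rw [← hconj]; simp [conj_pow]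
    have hinv3 : c⁻¹ = c ^ 3 := by
      rw [inv_eq_iff_mul_eq_one, ← pow_succ']; exact h4
    calc a * c ^ m = (a * c ^ m * a⁻¹) * a := by group
      _ = (c⁻¹) ^ m * a := by rw [hconjm]
      _ = c ^ (3*m) * a := by rw [hinv3, ← pow_mul, mul_comm 3 m]
  have hcinv : ∀ m : ℕ, (c ^ m)⁻¹ = c ^ (3 * m) := by
    intro m
    rw [inv_eq_iff_mul_eq_one, ← pow_add,
      show m + 3 * m = 4 * m from by ring, pow_mul, h4, one_pow]
  set f : ZMod 4 × ZMod 2 → G := fun p => c ^ p.1.val * a ^ p.2.val with hf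
  have hfnat : ∀ m n : ℕ, f ((m : ZMod 4), (n : ZMod 2)) = c ^ m * a ^ n := by
    intro m n
    simp only [hf]
    rw [ZMod.val_natCast, ZMod.val_natCast, ← hmodc, ← hmoda]
  have hnotpow : ∀ t : ℕ, a ≠ c ^ t := by
    intro t hat
    have hcomm : a * c = c * a := by rw [hat, ← pow_succ', ← pow_succ]
    have h1 : a * c = c ^ 3 * a := by simpa using hswap 1
    have h33 : c = c ^ 3 := mul_right_cancel (hcomm.symm.trans h1)
    apply h2
    calc c ^ 2 = c * c := pow_two c
      _ = c ^ 3 * c := by rw [← h33]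
      _ = c ^ 4 := by rw [← pow_succ]
      _ = 1 := h4
  have hkey : ∀ im jm km lm : ℕ, jm = 0 ∨ jm = 1 →
      (c ^ im * a ^ jm) * (c ^ km * a ^ lm) = c ^ (im + 3 ^ jm * km) * a ^ (jm + lm) := by
    rintro im jm km lm (rfl | rfl)
    · rw [pow_zero, mul_one, pow_zero, one_mul, zero_add, pow_add]
      group
    · rw [pow_one, pow_one, pow_add]
      calc c ^ im * a * (c ^ km * a ^ lm)
          = c ^ im * (a * c ^ km) * a ^ lm := by group
        _ = c ^ im * (c ^ (3 * km) * a) * a ^ lm := by rw [hswap]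
        _ = c ^ im * c ^ (3 * km) * (a ^ (1 + lm)) := by rw [pow_add, pow_one]; group
  have hval2 : ∀ j : ZMod 2, j.val = 0 ∨ j.val = 1 := by
    intro j; have := ZMod.val_lt j; omega
  have hmul : ∀ p q : ZMod 4 × ZMod 2, f p * f q ∈ Set.range f := by
    rintro ⟨i, j⟩ ⟨k, l⟩
    refine ⟨(((i.val + 3 ^ j.val * k.val : ℕ) : ZMod 4), ((j.val + l.val : ℕ) : ZMod 2)), ?_⟩
    rw [hfnat]
    exact (hkey i.val j.val k.val l.val (hval2 j)).symm
  have hone : (1 : G) ∈ Set.range f := ⟨(0, 0), by simp [hf]⟩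
  have hinvmem : ∀ p : ZMod 4 × ZMod 2, (f p)⁻¹ ∈ Set.range f := by
    rintro ⟨i, j⟩
    rcases hval2 j with hj | hj
    · refine ⟨(((3 * i.val : ℕ) : ZMod 4), ((0 : ℕ) : ZMod 2)), ?_⟩
      rw [hfnat]
      simp only [hf, hj, pow_zero, mul_one]
      rw [hcinv]
    · refine ⟨(((3 * (3 * i.val) : ℕ) : ZMod 4), ((1 : ℕ) : ZMod 2)), ?_⟩
      rw [hfnat]
      simp only [hf, hj, pow_one]
      rw [mul_inv_rev, hainv, hcinv, hswap]
  set H : Subgroup G := {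
    carrier := Set.range f
    mul_mem' := by rintro x y ⟨p, rfl⟩ ⟨q, rfl⟩; exact hmul p q
    one_mem' := hone
    inv_mem' := by rintro x ⟨p, rfl⟩; exact hinvmem p } with hH
  have haH : a ∈ Set.range f :=
    ⟨(0, 1), by simp [hf]; rw [show (1 : ZMod 2).val = 1 from rfl, pow_one]⟩
  have hcH : c ∈ Set.range f :=
    ⟨(1, 0), by simp [hf]; rw [show (1 : ZMod 4).val = 1 from rfl, pow_one]⟩
  have hbH : b ∈ H := by
    have hba : b = a * c := by rw [hc, ← mul_assoc, ← pow_two, ha, one_mul]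
    rw [hba]
    exact H.mul_mem haH hcH
  have hclosure : Subgroup.closure {a, b} = H := by
    apply le_antisymm
    · rw [Subgroup.closure_le]
      rintro x (rfl | rfl)
      · exact haH
      · exact hbH
    · rintro x ⟨⟨i, j⟩, rfl⟩
      have hac : a ∈ Subgroup.closure {a, b} := Subgroup.subset_closure (by simp)
      have hbc : b ∈ Subgroup.closure {a, b} := Subgroup.subset_closure (by simp)
      exact Subgroup.mul_mem _ (Subgroup.pow_mem _ (Subgroup.mul_mem _ hac hbc) _)
        (Subgroup.pow_mem _ hac _)
  have hpowinj : ∀ m n : ℕ, m < 4 → n < 4 → c ^ m = c ^ n → m = n := by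
    intro m n hm hn hmn
    have := pow_injOn_Iio_orderOf (x := c)
    rw [horder] at this
    exact this (Set.mem_Iio.mpr hm) (Set.mem_Iio.mpr hn) hmn
  have hinj : Function.Injective f := by
    rintro ⟨i, j⟩ ⟨k, l⟩ hfe
    simp only [hf] at hfe
    have hci : i.val < 4 := ZMod.val_lt i
    have hck : k.val < 4 := ZMod.val_lt k
    have hjl : j = l := by
      by_contra hne
      have hvne : j.val ≠ l.val := fun h => hne (ZMod.val_injective _ h)
      rcases hval2 j with hj | hj <;> rcases hval2 l with hl | hl <;>
        first
        | (exact hvne (hj.trans hl.symm))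
        | (rw [hj, hl, pow_zero, mul_one, pow_one] at hfe
           exact hnotpow (3 * k.val + i.val) (by
             rw [pow_add, ← hcinv, eq_inv_mul_iff_mul_eq]; exact hfe.symm))
        | (rw [hj, hl, pow_zero, mul_one, pow_one] at hfe
           exact hnotpow (3 * i.val + k.val) (by
             rw [pow_add, ← hcinv, eq_inv_mul_iff_mul_eq]; exact hfe))
    subst hjl
    have : c ^ i.val = c ^ k.val := mul_right_cancel hfe
    exact Prod.ext (ZMod.val_injective _ (hpowinj _ _ hci hck this)) rfl
  constructor
  · rw [hclosure]; exact Set.finite_range f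
  · rw [hclosure]
    have h1 : Nat.card ↥(Set.range f) = Nat.card (ZMod 4 × ZMod 2) :=
      Nat.card_range_of_injective hinj
    have h8 : Nat.card (ZMod 4 × ZMod 2) = 8 := by simp [Nat.card_eq_fintype_card]
    calc Nat.card ↥H = Nat.card ↥(Set.range f) := rfl
      _ = 8 := by rw [h1, h8]

end GroupAux

open MvPolynomial in
lemma kernelK_gessel : kernelK gessel =
    MvPolynomial.C (1/4 : ℂ) *
      (X 0 ^ 2 * X 1 + X 0 ^ 2 * X 1 ^ 2 + X 1 + 1) - X 0 * X 1 := by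
  have h : Finset.Icc (-1 : ℤ) 1 = {-1, 0, 1} := by decide
  unfold kernelK
  rw [h]
  simp [Finset.sum_insert, gessel]
  norm_num
  ring

/-- A point of the kernel curve with coordinates avoiding `0, ±1` and `-1`. -/
noncomputable def gesselPt : Fin 2 → ℂ := ![2, (3 + Complex.I * Real.sqrt 7)/8]

lemma evalK_gesselPt : MvPolynomial.eval gesselPt (kernelK gessel) = 0 := by
  have hs : (Complex.I * Real.sqrt 7) ^ 2 = -7 := by
    rw [mul_pow, Complex.I_sq]
    norm_cast
    rw [Real.sq_sqrt] <;> norm_num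
  rw [kernelK_gessel]
  simp [gesselPt]
  ring_nf
  linear_combination ((1:ℂ)/64) * hs

lemma eval_span_zero {g : MvPolynomial (Fin 2) ℂ} (hg : g ∈ Ideal.span {kernelK gessel}) :
    MvPolynomial.eval gesselPt g = 0 := by
  obtain ⟨f, rfl⟩ := Ideal.mem_span_singleton'.mp hg
  rw [map_mul, evalK_gesselPt, mul_zero]

lemma corrR_gessel : corrR gessel = 1 / Real.sqrt 2 := by
  have h : Finset.Icc (-1 : ℤ) 1 = {-1, 0, 1} := by decide
  unfold corrR
  rw [h]
  simp [Finset.sum_insert, gessel]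
  norm_num
  have h2 : Real.sqrt 2 > 0 := by positivity
  field_simp
  exact Real.sq_sqrt (by norm_num)

lemma theta_gessel : theta gessel = 3 * Real.pi / 4 := by
  unfold theta
  rw [corrR_gessel, Real.arccos_neg]
  have h2 : Real.sqrt 2 > 0 := by positivity
  have h : (1:ℝ) / Real.sqrt 2 = Real.cos (Real.pi/4) := by
    rw [Real.cos_pi_div_four]
    field_simp
    exact (Real.sq_sqrt (by norm_num)).symm
  rw [h, Real.arccos_cos (by positivity) (by linarith [Real.pi_pos])]
  ring

/-- Gessel's walk has zero drift, correlation coefficient `R = 1/√2`,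
angle `θ = 3π/4`, and its group `W = ⟨ξ, η⟩` is finite of order `8`. -/
theorem gessel_group_order_eight
    (F : Type) [Field F] [Algebra ℂ F] [Algebra (QuotK gessel) F]
    [IsScalarTower ℂ (QuotK gessel) F] [IsFractionRing (QuotK gessel) F]
    (ξ η : F ≃ₐ[ℂ] F)
    (hξx : ξ (xbar gessel F) = xbar gessel F)
    (hξy : ξ (ybar gessel F) =
      Polynomial.aeval (xbar gessel F) (polyC gessel) /
        (Polynomial.aeval (xbar gessel F) (polyA gessel) * ybar gessel F))
    (hηy : η (ybar gessel F) = ybar gessel F)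
    (hηx : η (xbar gessel F) =
      Polynomial.aeval (ybar gessel F) (polyCt gessel) /
        (Polynomial.aeval (ybar gessel F) (polyAt gessel) * xbar gessel F)) :
    (∑ i ∈ Finset.Icc (-1 : ℤ) 1, ∑ j ∈ Finset.Icc (-1 : ℤ) 1, (i : ℝ) * gessel i j = 0) ∧
    (∑ i ∈ Finset.Icc (-1 : ℤ) 1, ∑ j ∈ Finset.Icc (-1 : ℤ) 1, (j : ℝ) * gessel i j = 0) ∧
    corrR gessel = 1 / Real.sqrt 2 ∧
    theta gessel = 3 * Real.pi / 4 ∧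
    ((Subgroup.closure {ξ, η} : Subgroup (F ≃ₐ[ℂ] F)) : Set (F ≃ₐ[ℂ] F)).Finite ∧
    Nat.card ↥(Subgroup.closure {ξ, η} : Subgroup (F ≃ₐ[ℂ] F)) = 8 := by
  have hIcc : Finset.Icc (-1 : ℤ) 1 = {-1, 0, 1} := by decide
  have hd1 : ∑ i ∈ Finset.Icc (-1 : ℤ) 1, ∑ j ∈ Finset.Icc (-1 : ℤ) 1,
      (i : ℝ) * gessel i j = 0 := by
    rw [hIcc]; norm_num [Finset.sum_insert, gessel]
  have hd2 : ∑ i ∈ Finset.Icc (-1 : ℤ) 1, ∑ j ∈ Finset.Icc (-1 : ℤ) 1,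
      (j : ℝ) * gessel i j = 0 := by
    rw [hIcc]; norm_num [Finset.sum_insert, gessel]
  refine ⟨hd1, hd2, corrR_gessel, theta_gessel, ?_⟩
  -- the algebraic part
  have hCZ : CharZero F := charZero_of_injective_algebraMap (algebraMap ℂ F).injective
  set Xb : F := xbar gessel F with hXb
  set Yb : F := ybar gessel F with hYb
  set Ψ : MvPolynomial (Fin 2) ℂ →ₐ[ℂ] F :=
    (IsScalarTower.toAlgHom ℂ (QuotK gessel) F).comp
      (Ideal.Quotient.mkₐ ℂ (Ideal.span {kernelK gessel})) with hΨ
  have hΨ0 : Ψ (MvPolynomial.X 0) = Xb := rfl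
  have hΨ1 : Ψ (MvPolynomial.X 1) = Yb := rfl
  have hΨne : ∀ g : MvPolynomial (Fin 2) ℂ, MvPolynomial.eval gesselPt g ≠ 0 → Ψ g ≠ 0 := by
    intro g hg h0
    apply hg
    apply eval_span_zero
    rw [← Ideal.Quotient.eq_zero_iff_mem]
    apply IsFractionRing.injective (QuotK gessel) F
    rw [map_zero]
    exact h0
  -- nonvanishing facts
  have hX0 : Xb ≠ 0 := by
    rw [← hΨ0]
    exact hΨne _ (by simp [gesselPt])
  have him : Complex.I.im * (Real.sqrt 7 : ℂ).re ≠ 0 := by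
    simp [Complex.I_im]
  have hY0 : Yb ≠ 0 := by
    rw [← hΨ1]
    refine hΨne _ ?_
    simp only [MvPolynomial.eval_X, gesselPt, Matrix.cons_val_one, Matrix.head_cons,
      Matrix.cons_val_zero]
    intro h
    rw [_root_.div_eq_zero_iff] at h
    rcases h with h | h
    · have := congrArg Complex.im h
      simp [Complex.add_im, Complex.mul_im] at this
    · norm_num at h
  have hXm1 : Xb - 1 ≠ 0 := by
    have h' : Ψ (MvPolynomial.X 0 - 1) = Xb - 1 := by rw [map_sub, map_one, hΨ0]
    rw [← h']
    refine hΨne _ ?_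
    simp [gesselPt]
    norm_num
  have hXp1 : Xb + 1 ≠ 0 := by
    have h' : Ψ (MvPolynomial.X 0 + 1) = Xb + 1 := by rw [map_add, map_one, hΨ0]
    rw [← h']
    refine hΨne _ ?_
    simp [gesselPt]
    norm_num
  have hYp1 : Yb + 1 ≠ 0 := by
    have h' : Ψ (MvPolynomial.X 1 + 1) = Yb + 1 := by rw [map_add, map_one, hΨ1]
    rw [← h']
    refine hΨne _ ?_
    simp only [map_add, map_one, MvPolynomial.eval_X, gesselPt,
      Matrix.cons_val_one, Matrix.head_cons]
    intro h
    have := congrArg Complex.im h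
    simp [Complex.add_im, Complex.div_im, Complex.mul_im] at this
  -- the kernel relation
  have hrel : Xb ^ 2 * Yb + Xb ^ 2 * Yb ^ 2 + Yb + 1 = 4 * (Xb * Yb) := by
    have h0 : Ψ (kernelK gessel) = 0 := by
      rw [hΨ]
      simp only [AlgHom.comp_apply, Ideal.Quotient.mkₐ_eq_mk]
      rw [Ideal.Quotient.eq_zero_iff_mem.mpr (Ideal.mem_span_singleton_self _), map_zero]
    rw [kernelK_gessel] at h0
    simp only [map_sub, map_add, map_mul, map_pow, map_one, hΨ0, hΨ1,
      MvPolynomial.algHom_C] at h0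
    have h4 : algebraMap ℂ F (1/4 : ℂ) = 1/4 := by
      rw [map_div₀, map_one, map_ofNat]
    rw [h4] at h0
    linear_combination (4:F) * h0
  -- actions of ξ and η in simplified form
  have hu : algebraMap ℂ F (1/4 : ℂ) = 1/4 := by rw [map_div₀, map_one, map_ofNat]
  have h14 : (1:F)/4 ≠ 0 := by norm_num
  have hxi_y : ξ Yb = 1 / (Xb ^ 2 * Yb) := by
    have hcc : Polynomial.aeval Xb (polyC gessel) = (1:F)/4 := by
      simp only [polyC, map_add, map_mul, map_pow, Polynomial.aeval_C, Polynomial.aeval_X]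
      norm_num [gessel, hu]
    have haa : Polynomial.aeval Xb (polyA gessel) = (1/4 : F) * Xb ^ 2 := by
      simp only [polyA, map_add, map_mul, map_pow, Polynomial.aeval_C, Polynomial.aeval_X]
      norm_num [gessel, hu]
    rw [hξy, hcc, haa]
    rw [div_eq_div_iff
      (mul_ne_zero (mul_ne_zero h14 (pow_ne_zero 2 hX0)) hY0)
      (mul_ne_zero (pow_ne_zero 2 hX0) hY0)]
    ring
  have heta_x : η Xb = 1 / (Xb * Yb) := by
    have hcc : Polynomial.aeval Yb (polyCt gessel) = (1/4 : F) * (Yb + 1) := by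
      simp only [polyCt, map_add, map_mul, map_pow, Polynomial.aeval_C, Polynomial.aeval_X]
      norm_num [gessel, hu]
      ring
    have haa : Polynomial.aeval Yb (polyAt gessel) = (1/4 : F) * (Yb * (Yb + 1)) := by
      simp only [polyAt, map_add, map_mul, map_pow, Polynomial.aeval_C, Polynomial.aeval_X]
      norm_num [gessel, hu]
      ring
    rw [hηx, hcc, haa]
    rw [div_eq_div_iff
      (mul_ne_zero (mul_ne_zero h14 (mul_ne_zero hY0 hYp1)) hX0)
      (mul_ne_zero hX0 hY0)]
    ring
  -- extensionality: an automorphism is determined by its values on Xb and Yb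
  have hext : ∀ φ ψ : F ≃ₐ[ℂ] F, φ Xb = ψ Xb → φ Yb = ψ Yb → φ = ψ := by
    intro φ ψ hx hy
    have hcomp : (φ.toAlgHom.comp Ψ) = (ψ.toAlgHom.comp Ψ) := by
      apply MvPolynomial.algHom_ext
      intro i
      fin_cases i
      · simpa [hΨ0] using hx
      · simpa [hΨ1] using hy
    have hq : ∀ q : QuotK gessel, φ (algebraMap (QuotK gessel) F q) =
        ψ (algebraMap (QuotK gessel) F q) := by
      intro q
      obtain ⟨p, rfl⟩ := Ideal.Quotient.mk_surjective q
      exact DFunLike.congr_fun hcomp p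
    apply AlgEquiv.ext
    intro z
    obtain ⟨x, y, -, rfl⟩ := IsFractionRing.div_surjective (A := QuotK gessel) z
    rw [map_div₀, map_div₀, hq, hq]
  have hone_app : ∀ z : F, (1 : F ≃ₐ[ℂ] F) z = z := fun z => rfl
  have hmul_app : ∀ (φ ψ : F ≃ₐ[ℂ] F) (z : F), (φ * ψ) z = φ (ψ z) := fun φ ψ z => rfl
  -- ξ is an involution
  have hξ2 : ξ ^ 2 = 1 := by
    rw [pow_two]
    apply hext
    · rw [hmul_app, hξx, hξx, hone_app]
    · rw [hmul_app, hxi_y, map_div₀, map_one, map_mul, map_pow, hξx, hxi_y, hone_app]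
      field_simp
      try ring
  -- η is an involution
  have hη2 : η ^ 2 = 1 := by
    rw [pow_two]
    apply hext
    · rw [hmul_app, heta_x, map_div₀, map_one, map_mul, heta_x, hηy, hone_app]
      field_simp
      try ring
    · rw [hmul_app, hηy, hηy, hone_app]
  -- the rotation ζ = ξη
  set ζ : F ≃ₐ[ℂ] F := ξ * η with hζ
  have hζx : ζ Xb = Xb * Yb := by
    rw [hζ, hmul_app, heta_x, map_div₀, map_one, map_mul, hξx, hxi_y]
    field_simp
    try ring
  have hζy : ζ Yb = 1 / (Xb ^ 2 * Yb) := by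
    rw [hζ, hmul_app, hηy, hxi_y]
  have hv2 : ζ (Xb * Yb) = 1 / Xb := by
    rw [map_mul, hζx, hζy]
    field_simp
    try ring
  have hv3 : ζ (1 / Xb) = 1 / (Xb * Yb) := by
    rw [map_div₀, map_one, hζx]
  have hv4 : ζ (1 / (Xb * Yb)) = Xb := by
    rw [map_div₀, map_one, map_mul, hζx, hζy]
    field_simp
    try ring
  have hw2 : ζ (1 / (Xb ^ 2 * Yb)) = 1 / Yb := by
    rw [map_div₀, map_one, map_mul, map_pow, hζx, hζy]
    field_simp
    try ring
  have hw3 : ζ (1 / Yb) = Xb ^ 2 * Yb := by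
    rw [map_div₀, map_one, hζy, one_div_one_div]
  have hw4 : ζ (Xb ^ 2 * Yb) = Yb := by
    rw [map_mul, map_pow, hζx, hζy]
    field_simp
    try ring
  have h4e : ζ ^ 4 = (ζ * ζ) * (ζ * ζ) := by
    rw [show (4:ℕ) = 2 * 2 from rfl, pow_mul, pow_two, pow_two]
  have hζ4 : ζ ^ 4 = 1 := by
    apply hext
    · calc (ζ ^ 4) Xb = ζ (ζ (ζ (ζ Xb))) := by rw [h4e]; rfl
        _ = Xb := by rw [hζx, hv2, hv3, hv4]
        _ = (1 : F ≃ₐ[ℂ] F) Xb := rfl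
    · calc (ζ ^ 4) Yb = ζ (ζ (ζ (ζ Yb))) := by rw [h4e]; rfl
        _ = Yb := by rw [hζy, hw2, hw3, hw4]
        _ = (1 : F ≃ₐ[ℂ] F) Yb := rfl
  have hζ2ne : ζ ^ 2 ≠ 1 := by
    intro h
    have h1 : (ζ ^ 2) Xb = Xb := by rw [h, hone_app]
    have h2 : (ζ ^ 2) Xb = 1 / Xb := by
      calc (ζ ^ 2) Xb = ζ (ζ Xb) := by rw [pow_two]; rfl
        _ = 1 / Xb := by rw [hζx, hv2]
    rw [h2] at h1
    have hX2 : Xb ^ 2 = 1 := by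
      rw [div_eq_iff hX0] at h1
      calc Xb ^ 2 = Xb * Xb := pow_two Xb
        _ = 1 := by rw [← h1]
    have hfac : (Xb - 1) * (Xb + 1) = 0 := by linear_combination hX2
    rcases mul_eq_zero.mp hfac with h | h
    · exact hXm1 h
    · exact hXp1 h
  exact dihedral8 hξ2 hη2 (by rw [← hζ]; exact hζ4) (by rw [← hζ]; exact hζ2ne)
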